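/- Let R be an order in an algebraic number field K. Then every 2×2 matrix over R is a sum of cubes of matrices over R if and only if 3 is coprime to the discriminant of R. -/

import Mathlib

section MatrixPart

variable {S : Type*} [CommRing S]

private lemma pow3 (A : Matrix (Fin 2) (Fin 2) S) : A ^ 3 = A * A * A := by
  rw [pow_succ, pow_two]

/-- trace of a cube of a 2×2 matrix is a cube modulo 3 -/
lemma trace_cube_eq (N : Matrix (Fin 2) (Fin 2) S) :
    ∃ d : S, (N ^ 3).trace = N.trace ^ 3 + 3 * d := by
  refine ⟨-((N 0 0 + N 1 1) * (N 0 0 * N 1 1 - N 0 1 * N 1 0)), ?_⟩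
  rw [pow3]
  simp [Matrix.trace_fin_two, Matrix.mul_apply, Fin.sum_univ_succ]
  ring

lemma sum_cubes_eq : ∀ (l : ℕ) (f : Fin l → S), ∃ c : S, ∑ i, f i ^ 3 = (∑ i, f i) ^ 3 + 3 * c := by
  intro l
  induction l with
  | zero => intro f; exact ⟨0, by simp⟩
  | succ l ih =>
    intro f
    obtain ⟨c, hc⟩ := ih (fun i => f i.succ)
    refine ⟨c - (f 0) ^ 2 * (∑ i : Fin l, f i.succ) - f 0 * (∑ i : Fin l, f i.succ) ^ 2, ?_⟩
    simp only [Fin.sum_univ_succ]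
    linear_combination hc

private lemma invcube (x u z : S) (hx : x * x + u * z = 1) :
    (!![x, u; z, -x] : Matrix (Fin 2) (Fin 2) S) ^ 3 = !![x, u; z, -x] := by
  rw [pow3]
  funext i j
  fin_cases i <;> fin_cases j <;>
    simp [Matrix.mul_apply, Fin.sum_univ_succ]
  · linear_combination x * hx
  · linear_combination u * hx
  · linear_combination z * hx
  · linear_combination (-x) * hx

/-- any 2×2 matrix whose trace is a cube mod 3 is a sum of 8 cubes. -/
lemma matrix_sum_cubes (M : Matrix (Fin 2) (Fin 2) S) (t s : S)
    (h : M 0 0 + M 1 1 = t ^ 3 + 3 * s) :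
    ∃ N : Fin 8 → Matrix (Fin 2) (Fin 2) S, M = ∑ i, N i ^ 3 := by
  refine ⟨![!![t,0;0,0], !![1,0;0,0], !![-1,-s;1,0],
    !![(M 0 0 - t ^ 3 - 2 * s), 1 - (M 0 0 - t ^ 3 - 2 * s) * (M 0 0 - t ^ 3 - 2 * s); 1, -(M 0 0 - t ^ 3 - 2 * s)], !![1, M 0 1 - s ^ 2 + s - 1 + (M 0 0 - t ^ 3 - 2 * s) * (M 0 0 - t ^ 3 - 2 * s); 0, -1], !![-1,0;0,1],
    !![1, 0; M 1 0 - 2 + s, -1], !![-1,0;0,1]], ?_⟩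
  have c0 : (!![t,0;0,0] : Matrix (Fin 2) (Fin 2) S) ^ 3 = !![t^3,0;0,0] := by
    rw [pow3]; funext i j; fin_cases i <;> fin_cases j <;>
      simp [Matrix.mul_apply, Fin.sum_univ_succ] <;> ring
  have c1 : (!![(1:S),0;0,0] : Matrix (Fin 2) (Fin 2) S) ^ 3 = !![1,0;0,0] := by
    rw [pow3]; funext i j; fin_cases i <;> fin_cases j <;>
      simp [Matrix.mul_apply, Fin.sum_univ_succ]
  have c2 : (!![-1,-s;1,0] : Matrix (Fin 2) (Fin 2) S) ^ 3 = !![2*s-1, s^2-s; 1-s, s] := by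
    rw [pow3]; funext i j; fin_cases i <;> fin_cases j <;>
      simp [Matrix.mul_apply, Fin.sum_univ_succ] <;> ring
  have c3 := invcube (M 0 0 - t ^ 3 - 2 * s) (1 - (M 0 0 - t ^ 3 - 2 * s) * (M 0 0 - t ^ 3 - 2 * s)) 1 (by ring)
  have c4 : (!![(1:S), M 0 1 - s ^ 2 + s - 1 + (M 0 0 - t ^ 3 - 2 * s) * (M 0 0 - t ^ 3 - 2 * s); 0, -1] : Matrix (Fin 2) (Fin 2) S) ^ 3
      = !![(1:S), M 0 1 - s ^ 2 + s - 1 + (M 0 0 - t ^ 3 - 2 * s) * (M 0 0 - t ^ 3 - 2 * s); 0, -1] := by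
    have := invcube (1 : S) (M 0 1 - s ^ 2 + s - 1 + (M 0 0 - t ^ 3 - 2 * s) * (M 0 0 - t ^ 3 - 2 * s)) 0 (by ring)
    simpa using this
  have c5 : (!![(-1 : S),0;0,1] : Matrix (Fin 2) (Fin 2) S) ^ 3 = !![(-1:S),0;0,1] := by
    have := invcube (-1 : S) 0 0 (by ring)
    simpa using this
  have c6 : (!![(1:S), 0; M 1 0 - 2 + s, -1] : Matrix (Fin 2) (Fin 2) S) ^ 3
      = !![(1:S), 0; M 1 0 - 2 + s, -1] := by
    have := invcube (1 : S) 0 (M 1 0 - 2 + s) (by ring)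
    simpa using this
  simp only [Fin.sum_univ_succ, Fin.sum_univ_zero, Matrix.cons_val_succ, Matrix.cons_val_zero]
  rw [c0, c1, c2, c3, c4, c5, c6]
  funext i j
  fin_cases i <;> fin_cases j <;>
    simp [Matrix.add_apply] <;> first | ring1 | linear_combination h | linear_combination -h

end MatrixPart

/-- Trace commutes with a ring hom compatible with bases. -/
lemma trace_map_of_basis {ι : Type*} [Fintype ι] [DecidableEq ι]
    {A B A' B' : Type*} [CommRing A] [CommRing B] [CommRing A'] [CommRing B']
    [Algebra A B] [Algebra A' B'] (σ : A →+* A') (Φ : B →+* B')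
    (b : Module.Basis ι A B) (b' : Module.Basis ι A' B')
    (hb : ∀ i, Φ (b i) = b' i) (hsmul : ∀ (c : A) (x : B), Φ (c • x) = σ c • Φ x)
    (x : B) : Algebra.trace A' B' (Φ x) = σ (Algebra.trace A B x) := by
  rw [Algebra.trace_eq_matrix_trace b x, Algebra.trace_eq_matrix_trace b' (Φ x)]
  have key : Algebra.leftMulMatrix b' (Φ x) = (Algebra.leftMulMatrix b x).map σ := by
    ext i j
    rw [Matrix.map_apply, Algebra.leftMulMatrix_eq_repr_mul, Algebra.leftMulMatrix_eq_repr_mul]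
    have h1 : Φ x * b' j = ∑ k, σ (b.repr (x * b j) k) • b' k := by
      rw [← hb j, ← map_mul]
      conv_lhs => rw [← b.sum_repr (x * b j)]
      rw [map_sum]
      simp only [hsmul, hb]
    rw [h1]
    rw [b'.repr_sum_self]
  rw [key]
  simp [Matrix.trace, Matrix.diag, map_sum]

/-- In a finite monoid some positive power of every element is idempotent. -/
lemma exists_pow_isIdempotentElem {U : Type*} [CommMonoid U] [Finite U] (x : U) :
    ∃ m : ℕ, 1 ≤ m ∧ IsIdempotentElem (x ^ m) := by
  obtain ⟨i, j, hij, hpow⟩ := Finite.exists_ne_map_eq_of_infinite (fun n : ℕ => x ^ n)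
  wlog hlt : i < j generalizing i j
  · exact this j i hij.symm hpow.symm (by omega)
  set d := j - i with hd
  have hdi : j = i + d := by omega
  have hd1 : 1 ≤ d := by omega
  have key : ∀ n, i ≤ n → x ^ (n + d) = x ^ n := by
    intro n hn
    have : x ^ (n + d) = x ^ (n - i) * x ^ (i + d) := by
      rw [← pow_add]; congr 1; omega
    rw [this, ← hdi, ← hpow, ← pow_add]
    congr 1; omega
  have key2 : ∀ (k n : ℕ), i ≤ n → x ^ (n + d * k) = x ^ n := by
    intro k
    induction k with
    | zero => simp
    | succ k ih =>
      intro n hn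
      have : n + d * (k + 1) = (n + d) + d * k := by ring
      rw [this, ih (n + d) (by omega), key n hn]
  refine ⟨(i + 1) * d, Nat.one_le_iff_ne_zero.mpr (Nat.mul_ne_zero (by omega) (by omega)), ?_⟩
  unfold IsIdempotentElem
  rw [← pow_add]
  have : (i + 1) * d + (i + 1) * d = (i + 1) * d + d * (i + 1) := by ring
  rw [this, key2 (i + 1) ((i + 1) * d) (by nlinarith)]

/-- quotient of a reduced comm ring by an ideal generated by an idempotent is reduced -/
lemma isReduced_quot_idem {V : Type*} [CommRing V] [IsReduced V] (e : V)
    (he : IsIdempotentElem e) : IsReduced (V ⧸ Ideal.span {e}) := by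
  constructor
  intro x hx
  obtain ⟨z, rfl⟩ := Ideal.Quotient.mk_surjective x
  obtain ⟨n, hn⟩ := hx
  rw [← map_pow] at hn
  have hzn : z ^ n ∈ Ideal.span {e} := by
    rwa [← Ideal.Quotient.eq_zero_iff_mem]
  obtain ⟨c, hc⟩ := Ideal.mem_span_singleton'.mp hzn
  rcases Nat.eq_zero_or_pos n with h0 | hpos
  · -- z ^ 0 = 1 ∈ span e : then quotient trivial
    subst h0
    simp only [pow_zero] at hzn
    have htop : Ideal.span {e} = ⊤ := (Ideal.eq_top_iff_one _).mpr hzn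
    rw [Ideal.Quotient.eq_zero_iff_mem, htop]
    trivial
  · have hnil : ((1 - e) * z) ^ n = 0 := by
      rw [mul_pow, ← hc]
      have h1e : (1 - e) ^ n = 1 - e := by
        obtain ⟨k, rfl⟩ := Nat.exists_eq_add_of_le hpos
        rw [Nat.add_comm]
        exact (IsIdempotentElem.one_sub he).pow_succ_eq k
      rw [h1e]
      have he' : e * e = e := he
      linear_combination (-c) * he'
    have h0 : (1 - e) * z = 0 := IsNilpotent.eq_zero ⟨n, hnil⟩
    have : z ∈ Ideal.span {e} := by
      refine Ideal.mem_span_singleton'.mpr ⟨z, ?_⟩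
      linear_combination -h0
    rwa [Ideal.Quotient.eq_zero_iff_mem]

section Split

variable {V : Type*} [CommRing V] [Algebra (ZMod 3) V]

/-- split a commutative ring along an idempotent -/
noncomputable def splitHom (e : V) :
    V →ₐ[ZMod 3] (V ⧸ Ideal.span {1 - e}) × (V ⧸ Ideal.span {e}) :=
  (Ideal.Quotient.mkₐ (ZMod 3) _).prod (Ideal.Quotient.mkₐ (ZMod 3) _)

lemma splitHom_bijective {e : V} (he : IsIdempotentElem e) :
    Function.Bijective (splitHom e) := by
  have he' : e * e = e := he
  constructor
  · intro x y hxy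
    have h1 : Ideal.Quotient.mk (Ideal.span {1 - e}) x = Ideal.Quotient.mk _ y :=
      congrArg Prod.fst hxy
    have h2 : Ideal.Quotient.mk (Ideal.span {e}) x = Ideal.Quotient.mk _ y :=
      congrArg Prod.snd hxy
    rw [Ideal.Quotient.mk_eq_mk_iff_sub_mem] at h1 h2
    obtain ⟨a, ha⟩ := Ideal.mem_span_singleton'.mp h1
    obtain ⟨b, hb⟩ := Ideal.mem_span_singleton'.mp h2
    have hd : x - y = e * (x - y) + (1 - e) * (x - y) := by ring
    have hza : e * (x - y) = 0 := by
      rw [← ha]; linear_combination (-a) * he'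
    have hzb : (1 - e) * (x - y) = 0 := by
      rw [← hb]; linear_combination (-b) * he'
    have hxy0 : x - y = 0 := by rw [hd, hza, hzb]; ring
    exact sub_eq_zero.mp hxy0
  · intro p
    obtain ⟨a, ha⟩ := Ideal.Quotient.mk_surjective p.1
    obtain ⟨b, hb⟩ := Ideal.Quotient.mk_surjective p.2
    refine ⟨e * a + (1 - e) * b, ?_⟩
    have h1 : Ideal.Quotient.mk (Ideal.span {1 - e}) (e * a + (1 - e) * b) =
        Ideal.Quotient.mk _ a := by
      rw [Ideal.Quotient.mk_eq_mk_iff_sub_mem]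
      exact Ideal.mem_span_singleton'.mpr ⟨b - a, by ring⟩
    have h2 : Ideal.Quotient.mk (Ideal.span {e}) (e * a + (1 - e) * b) =
        Ideal.Quotient.mk _ b := by
      rw [Ideal.Quotient.mk_eq_mk_iff_sub_mem]
      exact Ideal.mem_span_singleton'.mpr ⟨a - b, by ring⟩
    have : splitHom e (e * a + (1 - e) * b) = (Ideal.Quotient.mk _ a, Ideal.Quotient.mk _ b) := by
      simp only [splitHom, AlgHom.prod_apply, Ideal.Quotient.mkₐ_eq_mk, h1, h2]
    rw [this, ha, hb]

lemma trace_split [Finite V] {e : V} (he : IsIdempotentElem e) (z : V) :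
    Algebra.trace (ZMod 3) V z =
      Algebra.trace (ZMod 3) (V ⧸ Ideal.span {1 - e}) (Ideal.Quotient.mk _ z)
      + Algebra.trace (ZMod 3) (V ⧸ Ideal.span {e}) (Ideal.Quotient.mk _ z) := by
  let eq := AlgEquiv.ofBijective (splitHom e) (splitHom_bijective he)
  have h1 : Algebra.trace (ZMod 3) _ (eq z) = Algebra.trace (ZMod 3) V z :=
    Algebra.trace_eq_of_algEquiv eq z
  have h2 : eq z = (Ideal.Quotient.mk _ z, Ideal.Quotient.mk _ z) := rfl
  rw [← h1, h2, Algebra.trace_prod_apply]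

end Split

universe u

/-- every nontrivial reduced finite (ZMod 3)-algebra has an element of nonzero trace -/
lemma dagger : ∀ (n : ℕ) (U : Type u) (_ : CommRing U) (_ : Finite U) (_ : IsReduced U)
    (_ : Nontrivial U) (_ : Algebra (ZMod 3) U), Nat.card U ≤ n →
    ∃ u : U, Algebra.trace (ZMod 3) U u ≠ 0 := by
  intro n
  induction n with
  | zero =>
    intro U _ _ _ _ _ hcard
    have : 0 < Nat.card U := Nat.card_pos
    omega
  | succ n ih =>
    intro U _ _ _ _ _ hcard
    by_cases hfield : ∀ x : U, x = 0 ∨ IsUnit x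
    · -- U is a field
      have hf : IsField U := by
        refine ⟨exists_pair_ne U, mul_comm, ?_⟩
        intro a ha
        rcases hfield a with h | h
        · exact absurd h ha
        · obtain ⟨v, hv⟩ := h
          exact ⟨v.inv, by rw [← hv]; exact_mod_cast v.mul_inv⟩
      letI : Field U := hf.toField
      haveI : Algebra.IsAlgebraic (ZMod 3) U := Algebra.IsAlgebraic.of_finite _ _
      haveI : Algebra.IsSeparable (ZMod 3) U :=
        Algebra.IsAlgebraic.isSeparable_of_perfectField
      have htr : Algebra.trace (ZMod 3) U ≠ 0 := Algebra.trace_ne_zero (ZMod 3) U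
      by_contra hcon
      push_neg at hcon
      exact htr (LinearMap.ext fun u => hcon u)
    · push_neg at hfield
      obtain ⟨x, hx0, hxu⟩ := hfield
      obtain ⟨m, hm1, hm⟩ := exists_pow_isIdempotentElem x
      set e := x ^ m with hedef
      have he0 : e ≠ 0 := by
        intro h
        exact hx0 (IsReduced.eq_zero x ⟨m, h⟩)
      have he1 : e ≠ 1 := by
        intro h
        apply hxu
        have hxx : x * x ^ (m - 1) = x ^ m := by
          rw [← pow_succ', Nat.sub_add_cancel hm1]
        exact IsUnit.of_mul_eq_one (x ^ (m - 1)) (by rw [hxx, ← hedef, h])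
      -- split along e : U ≃ U₁ × U₂ with U₁ = U ⧸ (1-e), U₂ = U ⧸ (e)
      set I₁ := Ideal.span {1 - e}
      set I₂ := Ideal.span {(e : U)}
      have hI₁ : I₁ ≠ ⊤ := by
        intro h
        obtain ⟨c, hc⟩ := Ideal.mem_span_singleton'.mp ((Ideal.eq_top_iff_one _).mp h)
        have he' : e * e = e := hm
        apply he0
        linear_combination (-e) * hc + (-c) * he'
      have hI₂ : I₂ ≠ ⊤ := by
        intro h
        obtain ⟨c, hc⟩ := Ideal.mem_span_singleton'.mp ((Ideal.eq_top_iff_one _).mp h)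
        have he' : e * e = e := hm
        apply he1
        linear_combination (1 - e) * hc + c * he'
      haveI f1 : Finite (U ⧸ I₁) := Quotient.finite _
      haveI f2 : Finite (U ⧸ I₂) := Quotient.finite _
      haveI n1 : Nontrivial (U ⧸ I₁) := Ideal.Quotient.nontrivial_iff.mpr hI₁
      haveI n2 : Nontrivial (U ⧸ I₂) := Ideal.Quotient.nontrivial_iff.mpr hI₂
      haveI r1 : IsReduced (U ⧸ I₁) := by
        have : I₁ = Ideal.span {(1 - e : U)} := rfl
        rw [this]
        exact isReduced_quot_idem _ (IsIdempotentElem.one_sub hm)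
      -- cardinalities
      have hcards : Nat.card U = Nat.card (U ⧸ I₁) * Nat.card (U ⧸ I₂) := by
        have heq := (AlgEquiv.ofBijective (splitHom e) (splitHom_bijective hm)).toEquiv
        rw [Nat.card_congr heq, Nat.card_prod]
      have hc2 : 2 ≤ Nat.card (U ⧸ I₂) := Finite.one_lt_card
      have hc1pos : 0 < Nat.card (U ⧸ I₁) := Nat.card_pos
      have hle : Nat.card (U ⧸ I₁) ≤ n := by nlinarith
      obtain ⟨u₁, hu₁⟩ := ih (U ⧸ I₁) inferInstance inferInstance inferInstance inferInstance inferInstance hle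
      -- lift u₁ : pick z with mk z = u₁, use u = e * z
      obtain ⟨z, hz⟩ := Ideal.Quotient.mk_surjective u₁
      refine ⟨e * z, ?_⟩
      rw [trace_split hm (e * z)]
      have hmk1 : Ideal.Quotient.mk I₁ (e * z) = u₁ := by
        rw [← hz, Ideal.Quotient.mk_eq_mk_iff_sub_mem]
        exact Ideal.mem_span_singleton'.mpr ⟨-z, by ring⟩
      have hmk2 : Ideal.Quotient.mk I₂ (e * z) = 0 := by
        rw [Ideal.Quotient.eq_zero_iff_mem]
        exact Ideal.mem_span_singleton'.mpr ⟨z, by ring⟩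
      rw [hmk1, hmk2, map_zero, add_zero]
      exact hu₁

open NumberField
set_option maxHeartbeats 4000000 in
set_option synthInstance.maxHeartbeats 400000 in

lemma P_iff_coprime (K : Type*) [Field K] [NumberField K]
    (R : Subalgebra ℤ K) (hR : ∀ x ∈ R, IsIntegral ℤ x)
    (b : Module.Basis (Fin (Module.finrank ℚ K)) ℤ R)
    (D : ℤ) (hD : (D : ℚ) = Algebra.discr ℚ (fun i => ((b i : R) : K))) :
    (∀ a : R, ∃ t r : R, a = t ^ 3 + 3 * r) ↔ IsCoprime (3 : ℤ) D := by
  classical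
  -- ℚ-basis of K coming from b
  have hli : LinearIndependent ℚ (fun i => ((b i : R) : K)) := by
    rw [← LinearIndependent.iff_fractionRing (R := ℤ) (K := ℚ)]
    exact b.linearIndependent.map' R.val.toLinearMap
      (LinearMap.ker_eq_bot.mpr Subtype.val_injective)
  have hcard : Fintype.card (Fin (Module.finrank ℚ K)) = Module.finrank ℚ K := by simp
  haveI : Nonempty (Fin (Module.finrank ℚ K)) := ⟨⟨0, Module.finrank_pos⟩⟩
  let bK : Module.Basis (Fin (Module.finrank ℚ K)) ℚ K :=
    basisOfLinearIndependentOfCardEqFinrank hli hcard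
  have hbK : ∀ i, bK i = ((b i : R) : K) := fun i => by
    simp [bK, coe_basisOfLinearIndependentOfCardEqFinrank]
  -- trace compatibility over ℚ
  have htrQ : ∀ x : R, Algebra.trace ℚ K (x : K) = ((Algebra.trace ℤ R x : ℤ) : ℚ) := by
    intro x
    exact trace_map_of_basis (Int.castRingHom ℚ) R.val.toRingHom b bK
      (fun i => (hbK i).symm)
      (fun c y => by
        rw [map_zsmul]
        exact (Int.cast_smul_eq_zsmul ℚ c (R.val.toRingHom y)).symm) x
  -- identify D with the determinant of the integral trace matrix
  have hMq : Algebra.traceMatrix ℚ (⇑bK) =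
      (Algebra.traceMatrix ℤ (⇑b)).map (Int.cast : ℤ → ℚ) := by
    ext i j
    simp only [Algebra.traceMatrix_apply, Algebra.traceForm_apply, Matrix.map_apply, hbK]
    rw [← MulMemClass.coe_mul, htrQ]
  have hDdet : D = (Algebra.traceMatrix ℤ (⇑b)).det := by
    have h1 : (D : ℚ) = (((Algebra.traceMatrix ℤ (⇑b)).det : ℤ) : ℚ) := by
      rw [hD]
      have : (fun i => ((b i : R) : K)) = ⇑bK := by funext i; rw [hbK]
      rw [this, Algebra.discr_def, hMq]
      exact (RingHom.map_det (Int.castRingHom ℚ) _).symm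
    exact_mod_cast h1
  -- coprimality is a condition mod 3
  have hcop : IsCoprime (3 : ℤ) D ↔ ((D : ZMod 3) ≠ 0) := by
    rw [Ne, ZMod.intCast_zmod_eq_zero_iff_dvd]
    constructor
    · intro h hdvd
      have := IsCoprime.isUnit_of_dvd' h dvd_rfl hdvd
      rw [Int.isUnit_iff] at this
      omega
    · intro hnd
      rw [Int.isCoprime_iff_gcd_eq_one]
      have h1 : Int.gcd 3 D = Nat.gcd 3 D.natAbs := by simp [Int.gcd]
      rw [h1]
      refine (Nat.Prime.coprime_iff_not_dvd Nat.prime_three).mpr ?_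
      intro hdvd
      exact hnd (Int.natAbs_dvd_natAbs.mp (by simpa using hdvd))
  -- the quotient ring T = R / 3R
  set I : Ideal R := Ideal.span {(3 : R)} with hIdef
  have hInetop : I ≠ ⊤ := by
    intro htop
    obtain ⟨c, hc⟩ := Ideal.mem_span_singleton'.mp ((Ideal.eq_top_iff_one I).mp htop)
    have hcK : (c : K) * 3 = 1 := by
      have h := congrArg (fun z : R => (z : K)) hc
      push_cast at h
      exact h
    have h3 : (3 : K) ≠ 0 := by norm_num
    have h13 : (c : K) = algebraMap ℚ K (1/3 : ℚ) := by
      apply mul_right_cancel₀ h3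
      rw [hcK]
      rw [show (3 : K) = algebraMap ℚ K (3 : ℚ) by simp]
      rw [← map_mul]
      norm_num
    have hint : IsIntegral ℤ ((1:ℚ)/3) := by
      have h2 : IsIntegral ℤ ((c : K)) := hR _ c.2
      rw [h13] at h2
      exact (isIntegral_algebraMap_iff (algebraMap ℚ K).injective).mp h2
    obtain ⟨z, hz⟩ := IsIntegrallyClosed.isIntegral_iff.mp hint
    have hz' : (z : ℚ) = 1/3 := by exact_mod_cast hz
    have hz3 : ((3 * z : ℤ) : ℚ) = 1 := by push_cast; rw [hz']; norm_num
    have : (3 : ℤ) * z = 1 := by exact_mod_cast hz3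
    omega
  haveI : Nontrivial (R ⧸ I) := Ideal.Quotient.nontrivial_iff.mpr hInetop
  have h3T : ((3 : ℕ) : R ⧸ I) = 0 := by
    have : ((3 : ℕ) : R ⧸ I) = Ideal.Quotient.mk I (3 : R) := by push_cast; rfl
    rw [this, Ideal.Quotient.eq_zero_iff_mem]
    exact Ideal.subset_span rfl
  haveI : CharP (R ⧸ I) 3 :=
    (CharP.ringChar_of_prime_eq_zero Nat.prime_three h3T) ▸ ringChar.charP (R ⧸ I)
  letI : Algebra (ZMod 3) (R ⧸ I) := ZMod.algebra _ _
  letI : Module (ZMod 3) (R ⧸ I) := Algebra.toModule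
  haveI : Module.Finite ℤ R := Module.Finite.of_basis b
  haveI : Module.Finite ℤ (R ⧸ I) :=
    Module.Finite.of_surjective (Ideal.Quotient.mkₐ ℤ I).toLinearMap
      Ideal.Quotient.mk_surjective
  haveI : Module.Finite (ZMod 3) (R ⧸ I) := Module.Finite.of_restrictScalars_finite ℤ _ _
  haveI : Finite (R ⧸ I) := Module.finite_of_finite (ZMod 3)
  haveI : Fact (Nat.Prime 3) := ⟨Nat.prime_three⟩
  -- smul compatibility
  have hsm : ∀ (m : ℤ) (t : R ⧸ I), ((m : ZMod 3) • t) = m • t := by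
    intro m t
    rw [Algebra.smul_def, zsmul_eq_mul, map_intCast]
  -- basis of T over ZMod 3
  have hliT : LinearIndependent (ZMod 3) (fun i => Ideal.Quotient.mk I (b i)) := by
    rw [Fintype.linearIndependent_iff]
    intro g hg i
    choose gz hgz using fun j => ZMod.intCast_surjective (n := 3) (g j)
    have hsum : Ideal.Quotient.mk I (∑ j, gz j • b j) = 0 := by
      rw [map_sum, ← hg]
      refine Finset.sum_congr rfl fun j _ => ?_
      rw [map_zsmul, ← hsm, hgz]
    have hmem : (∑ j, gz j • b j) ∈ I := by rwa [Ideal.Quotient.eq_zero_iff_mem] at hsum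
    obtain ⟨w, hw⟩ := Ideal.mem_span_singleton'.mp hmem
    have hw' : (∑ j, gz j • b j) = ∑ j, (3 * b.repr w j) • b j := by
      rw [← hw]
      have h32 : w * 3 = (3 : ℤ) • w := by
        rw [zsmul_eq_mul]; push_cast; ring
      rw [h32]
      conv_lhs => rw [← b.sum_repr w]
      rw [Finset.smul_sum]
      exact Finset.sum_congr rfl fun j _ => smul_smul 3 _ _
    have h1 : (fun j => gz j) = fun j => 3 * b.repr w j := by
      have ha := b.repr_sum_self (fun j => gz j)
      have hb := b.repr_sum_self (fun j => 3 * b.repr w j)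
      calc (fun j => gz j) = ⇑(b.repr (∑ j, gz j • b j)) := ha.symm
        _ = ⇑(b.repr (∑ j, (3 * b.repr w j) • b j)) := by rw [hw']
        _ = fun j => 3 * b.repr w j := hb
    have h2 : gz i = 3 * b.repr w i := congrFun h1 i
    rw [← hgz i, h2]
    rw [ZMod.intCast_zmod_eq_zero_iff_dvd]
    exact dvd_mul_right 3 _
  have hspanT : ⊤ ≤ Submodule.span (ZMod 3)
      (Set.range fun i => Ideal.Quotient.mk I (b i)) := by
    intro t _
    obtain ⟨x, rfl⟩ := Ideal.Quotient.mk_surjective t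
    have hx : Ideal.Quotient.mk I x =
        ∑ j, ((b.repr x j : ℤ) : ZMod 3) • Ideal.Quotient.mk I (b j) := by
      conv_lhs => rw [← b.sum_repr x]
      rw [map_sum]
      refine Finset.sum_congr rfl fun j _ => ?_
      rw [map_zsmul, hsm]
    rw [hx]
    exact Submodule.sum_mem _ fun j _ => Submodule.smul_mem _ _
      (Submodule.subset_span (Set.mem_range_self j))
  let bT : Module.Basis (Fin (Module.finrank ℚ K)) (ZMod 3) (R ⧸ I) := Module.Basis.mk hliT hspanT
  have hbT : ∀ i, bT i = Ideal.Quotient.mk I (b i) := fun i => Module.Basis.mk_apply hliT hspanT i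
  -- trace compatibility mod 3
  have htrT : ∀ x : R, Algebra.trace (ZMod 3) (R ⧸ I) (Ideal.Quotient.mk I x)
      = ((Algebra.trace ℤ R x : ℤ) : ZMod 3) := by
    intro x
    exact trace_map_of_basis (Int.castRingHom (ZMod 3)) (Ideal.Quotient.mk I) b bT
      (fun i => (hbT i).symm)
      (fun c y => by rw [map_zsmul, ← hsm]; rfl) x
  have hM3 : Algebra.traceMatrix (ZMod 3) (⇑bT) =
      (Algebra.traceMatrix ℤ (⇑b)).map (Int.cast : ℤ → ZMod 3) := by
    ext i j
    simp only [Algebra.traceMatrix_apply, Algebra.traceForm_apply, Matrix.map_apply, hbT]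
    rw [← map_mul, htrT]
  have hDmod : (D : ZMod 3) = (Algebra.traceMatrix (ZMod 3) (⇑bT)).det := by
    rw [hM3, hDdet]
    exact RingHom.map_det (Int.castRingHom (ZMod 3)) _
  -- Frobenius as a linear map
  let f : (R ⧸ I) →ₗ[ZMod 3] (R ⧸ I) := {
    toFun := fun t => t ^ 3
    map_add' := fun x y => add_pow_char x y 3
    map_smul' := fun c x => by
      show (c • x) ^ 3 = c • x ^ 3
      rw [smul_pow]
      congr 1
      exact ZMod.pow_card c }
  have hfapp : ∀ t : R ⧸ I, f t = t ^ 3 := fun t => rfl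
  -- P iff Frobenius surjective
  have hPiff : (∀ a : R, ∃ t r : R, a = t ^ 3 + 3 * r) ↔ Function.Surjective f := by
    constructor
    · intro hP y
      obtain ⟨x, rfl⟩ := Ideal.Quotient.mk_surjective y
      obtain ⟨t, r, hr⟩ := hP x
      refine ⟨Ideal.Quotient.mk I t, ?_⟩
      rw [hfapp, ← map_pow, hr, map_add]
      have : Ideal.Quotient.mk I (3 * r) = 0 := by
        rw [Ideal.Quotient.eq_zero_iff_mem]
        exact Ideal.mul_mem_right _ _ (Ideal.subset_span rfl)
      rw [this, add_zero]
    · intro hs a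
      obtain ⟨y, hy⟩ := hs (Ideal.Quotient.mk I a)
      obtain ⟨t, rfl⟩ := Ideal.Quotient.mk_surjective y
      rw [hfapp, ← map_pow] at hy
      have hmem : a - t ^ 3 ∈ I := by
        rw [← Ideal.Quotient.mk_eq_mk_iff_sub_mem, hy]
      obtain ⟨r, hr⟩ := Ideal.mem_span_singleton'.mp hmem
      exact ⟨t, r, by linear_combination -hr⟩
  -- injectivity from nondegeneracy
  have hker_of_det : (D : ZMod 3) ≠ 0 → ∀ x : R ⧸ I, x ^ 3 = 0 → x = 0 := by
    intro hdet x hx3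
    by_contra hx0
    apply hdet
    rw [hDmod]
    rw [← Matrix.exists_mulVec_eq_zero_iff]
    refine ⟨fun j => bT.repr x j, ?_, ?_⟩
    · intro hc
      apply hx0
      have : bT.repr x = 0 := by
        ext j
        exact congrFun hc j
      exact bT.repr.map_eq_zero_iff.mp this
    · funext i
      have hexp : x = ∑ j, bT.repr x j • bT j := (bT.sum_repr x).symm
      have htr0 : Algebra.trace (ZMod 3) (R ⧸ I) (bT i * x) = 0 := by
        have hnil : IsNilpotent (bT i * x) := ⟨3, by rw [mul_pow, hx3, mul_zero]⟩
        exact IsNilpotent.eq_zero (Algebra.isNilpotent_trace_of_isNilpotent hnil)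
      calc (Algebra.traceMatrix (ZMod 3) (⇑bT)).mulVec (fun j => bT.repr x j) i
          = ∑ j, Algebra.trace (ZMod 3) (R ⧸ I) (bT i * bT j) * bT.repr x j := by
            simp [Matrix.mulVec, dotProduct, Algebra.traceMatrix_apply,
              Algebra.traceForm_apply]
        _ = Algebra.trace (ZMod 3) (R ⧸ I) (bT i * x) := by
            conv_rhs => rw [hexp]
            rw [Finset.mul_sum, map_sum]
            refine Finset.sum_congr rfl fun j _ => ?_
            rw [mul_smul_comm, map_smul, smul_eq_mul, mul_comm]
        _ = 0 := htr0
  constructor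
  · -- P → coprime
    intro hP
    rw [hcop]
    intro hD0
    have hsurj := hPiff.mp hP
    have hinj : Function.Injective f := LinearMap.injective_iff_surjective.mpr hsurj
    haveI hred : IsReduced (R ⧸ I) := by
      constructor
      intro x hx
      obtain ⟨k, hk⟩ := hx
      have h3k : x ^ (3 ^ k) = 0 := by
        have hle : k ≤ 3 ^ k := Nat.le_of_lt (Nat.lt_pow_self (n := k) (by norm_num))
        calc x ^ (3 ^ k) = x ^ k * x ^ (3 ^ k - k) := by rw [← pow_add]; congr 1; omega
          _ = 0 := by rw [hk, zero_mul]
      have hiter : ∀ (j : ℕ) (y : R ⧸ I), (f ^ j) y = y ^ (3 ^ j) := by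
        intro j
        induction j with
        | zero => intro y; simp
        | succ j ih =>
          intro y
          rw [pow_succ', Module.End.mul_apply, ih y, hfapp, ← pow_mul, ← pow_succ]
      have hik : Function.Injective (⇑(f ^ k)) := by
        clear hiter h3k hk
        induction k with
        | zero => simp [Function.Injective]
        | succ k ih =>
          rw [pow_succ, Module.End.mul_eq_comp, LinearMap.coe_comp]
          exact ih.comp hinj
      apply hik
      rw [hiter, h3k, map_zero]
    -- a nonzero element of the radical of the trace form
    have hdet0 : (Algebra.traceMatrix (ZMod 3) (⇑bT)).det = 0 := by rw [← hDmod, hD0]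
    obtain ⟨c, hc0, hvec⟩ := Matrix.exists_mulVec_eq_zero_iff.mpr hdet0
    set x : R ⧸ I := ∑ j, c j • bT j with hxdef
    have hreprx : ∀ j, bT.repr x j = c j := by
      intro j
      rw [hxdef]
      rw [bT.repr_sum_self]
    have hx0 : x ≠ 0 := by
      intro h
      apply hc0
      funext j
      rw [← hreprx j, h, map_zero]
      rfl
    have hrad : ∀ y, Algebra.trace (ZMod 3) (R ⧸ I) (x * y) = 0 := by
      intro y
      have hey : y = ∑ j, bT.repr y j • bT j := (bT.sum_repr y).symm
      rw [hey, Finset.mul_sum, map_sum]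
      rw [show (0 : ZMod 3) = ∑ j, bT.repr y j • (0 : ZMod 3) by simp]
      refine Finset.sum_congr rfl fun j _ => ?_
      rw [mul_smul_comm, map_smul]
      congr 1
      -- trace (x * bT j) = 0
      have : x * bT j = ∑ i, c i • (bT i * bT j) := by
        rw [hxdef, Finset.sum_mul]
        exact Finset.sum_congr rfl fun i _ => smul_mul_assoc _ _ _
      rw [this, map_sum]
      have := congrFun hvec j
      calc ∑ i, Algebra.trace (ZMod 3) (R ⧸ I) (c i • (bT i * bT j))
          = ∑ i, Algebra.traceMatrix (ZMod 3) (⇑bT) j i * c i := by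
            refine Finset.sum_congr rfl fun i _ => ?_
            rw [map_smul, smul_eq_mul, mul_comm]
            congr 1
            simp [Algebra.traceMatrix_apply, Algebra.traceForm_apply, mul_comm]
        _ = 0 := this
    -- idempotent in the radical
    have hxnn : ¬ IsNilpotent x := fun h => hx0 (IsReduced.eq_zero x h)
    obtain ⟨m, hm1, hm⟩ := exists_pow_isIdempotentElem x
    set e : R ⧸ I := x ^ m with hedef
    have he0 : e ≠ 0 := fun h => hxnn ⟨m, h⟩
    have hetr : ∀ z, Algebra.trace (ZMod 3) (R ⧸ I) (e * z) = 0 := by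
      intro z
      have : e * z = x * (x ^ (m - 1) * z) := by
        rw [← mul_assoc, ← pow_succ', hedef]
        congr 2
        omega
      rw [this]
      exact hrad _
    -- split along e and contradict dagger
    have hI1top : Ideal.span {1 - e} ≠ ⊤ := by
      intro h
      obtain ⟨c', hc'⟩ := Ideal.mem_span_singleton'.mp ((Ideal.eq_top_iff_one _).mp h)
      have he' : e * e = e := hm
      exact he0 (by linear_combination (-e) * hc' + (-c') * he')
    haveI : Finite ((R ⧸ I) ⧸ Ideal.span {1 - e}) := Quotient.finite _
    haveI : Nontrivial ((R ⧸ I) ⧸ Ideal.span {1 - e}) := Ideal.Quotient.nontrivial_iff.mpr hI1top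
    haveI : IsReduced ((R ⧸ I) ⧸ Ideal.span {1 - e}) :=
      isReduced_quot_idem _ (IsIdempotentElem.one_sub hm)
    have halltr : ∀ u : (R ⧸ I) ⧸ Ideal.span {1 - e},
        Algebra.trace (ZMod 3) _ u = 0 := by
      intro u
      obtain ⟨z, hz⟩ := Ideal.Quotient.mk_surjective u
      have h1 := trace_split hm (e * z)
      rw [hetr z] at h1
      have hmk1 : Ideal.Quotient.mk (Ideal.span {1 - e}) (e * z) = u := by
        rw [← hz, Ideal.Quotient.mk_eq_mk_iff_sub_mem]
        exact Ideal.mem_span_singleton'.mpr ⟨-z, by ring⟩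
      have hmk2 : Ideal.Quotient.mk (Ideal.span {e}) (e * z) = 0 := by
        rw [Ideal.Quotient.eq_zero_iff_mem]
        exact Ideal.mem_span_singleton'.mpr ⟨z, by ring⟩
      rw [hmk1, hmk2, map_zero, add_zero] at h1
      exact h1.symm
    obtain ⟨u, hu⟩ := dagger (Nat.card ((R ⧸ I) ⧸ Ideal.span {1 - e}))
      ((R ⧸ I) ⧸ Ideal.span {1 - e}) inferInstance inferInstance inferInstance
      inferInstance inferInstance le_rfl
    exact hu (halltr u)
  · -- coprime → P
    intro hco
    have hdet := hcop.mp hco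
    have hker := hker_of_det hdet
    have hinj : Function.Injective f := by
      intro u v huv
      have : f (u - v) = 0 := by rw [map_sub, huv, sub_self]
      have h0 : (u - v) ^ 3 = 0 := by rw [← hfapp]; exact this
      have := hker _ h0
      exact sub_eq_zero.mp this
    have hsurj := LinearMap.injective_iff_surjective.mp hinj
    exact hPiff.mpr hsurj
theorem sum_of_cubes_iff_coprime_three (K : Type*) [Field K] [NumberField K]
    (R : Subalgebra ℤ K) (hR : ∀ x ∈ R, IsIntegral ℤ x)
    (b : Module.Basis (Fin (Module.finrank ℚ K)) ℤ R)
    (D : ℤ) (hD : (D : ℚ) = Algebra.discr ℚ (fun i => ((b i : R) : K))) :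
    (∀ M : Matrix (Fin 2) (Fin 2) R,
      ∃ (l : ℕ) (N : Fin l → Matrix (Fin 2) (Fin 2) R), M = ∑ i, (N i) ^ 3) ↔
    IsCoprime (3 : ℤ) D := by
  rw [← P_iff_coprime K R hR b D hD]
  constructor
  · intro hmat a
    obtain ⟨l, N, hN⟩ := hmat (!![a, 0; 0, 0])
    have htr : a = ∑ i, (N i ^ 3).trace := by
      have h1 := congrArg Matrix.trace hN
      rw [Matrix.trace_sum] at h1
      simpa [Matrix.trace_fin_two] using h1
    choose d hd using fun i => trace_cube_eq (N i)
    obtain ⟨c, hc⟩ := sum_cubes_eq l (fun i => (N i).trace)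
    refine ⟨∑ i, (N i).trace, c + ∑ i, d i, ?_⟩
    rw [htr]
    calc ∑ i, (N i ^ 3).trace = ∑ i, ((N i).trace ^ 3 + 3 * d i) :=
          Finset.sum_congr rfl fun i _ => hd i
      _ = (∑ i, (N i).trace ^ 3) + 3 * ∑ i, d i := by
          rw [Finset.sum_add_distrib, Finset.mul_sum]
      _ = (∑ i, (N i).trace) ^ 3 + 3 * (c + ∑ i, d i) := by rw [hc]; ring
  · intro hP M
    obtain ⟨t, s, hts⟩ := hP (M 0 0 + M 1 1)
    obtain ⟨N, hN⟩ := matrix_sum_cubes M t s hts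
    exact ⟨8, N, hN⟩
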